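/- Let δ ∈ (0,1), let h ≥ 3 be an integer with hδ ≤ 3, and set k = ⌊h/3⌋. Let R(h,δ) = {(s₁,…,s_k) ∈ ℝ^k : δ ≤ s₁ ≤ s₂ ≤ … ≤ s_k and s₁ + … + s_{k−1} + (h−k+1)s_k ≤ 3}. Then ∫_{R(h,δ)} ds₁⋯ds_k/(s₁⋯s_k) ≤ (1/k!)·(log((3−(k−1)δ)/((h−k+1)δ)))^k. -/

import Mathlib

open MeasureTheory

lemma perm_eq_of_monotone {k : ℕ} {s : Fin k → ℝ} (hs : Function.Injective s)
    {σ τ : Equiv.Perm (Fin k)} (h1 : Monotone (s ∘ σ)) (h2 : Monotone (s ∘ τ)) : σ = τ := by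
  haveI : WellFoundedLT (Fin k) := inferInstance
  have hσ : StrictMono (s ∘ σ) := h1.strictMono_of_injective (hs.comp σ.injective)
  have hτ : StrictMono (s ∘ τ) := h2.strictMono_of_injective (hs.comp τ.injective)
  have hr : Set.range (s ∘ σ) = Set.range (s ∘ τ) := by
    rw [Set.range_comp, Set.range_comp, Equiv.range_eq_univ, Equiv.range_eq_univ]
  have heq := (StrictMono.range_inj hσ hτ).mp hr
  ext i
  have h5 := congrFun heq i
  simp only [Function.comp_apply] at h5
  exact congrArg Fin.val (hs h5)

lemma diag_null {k : ℕ} {i j : Fin k} (hij : i ≠ j) :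
    volume {s : Fin k → ℝ | s i = s j} = 0 := by
  have h : {s : Fin k → ℝ | s i = s j} =
      (LinearMap.ker ((LinearMap.proj i : (Fin k → ℝ) →ₗ[ℝ] ℝ) - LinearMap.proj j) : Set _) := by
    ext s; simp [LinearMap.mem_ker, sub_eq_zero]
  rw [h]
  apply Measure.addHaar_submodule
  intro htop
  have h1 : (Pi.single i 1 : Fin k → ℝ) ∈
      LinearMap.ker ((LinearMap.proj i : (Fin k → ℝ) →ₗ[ℝ] ℝ) - LinearMap.proj j) :=
    htop ▸ trivial
  simp [LinearMap.mem_ker, Pi.single_apply, hij.symm] at h1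

lemma key_bound (k : ℕ) (δ M : ℝ) (hδ : 0 < δ) (hδM : δ ≤ M) (R : Set (Fin k → ℝ))
    (hR : R ⊆ {s | (∀ i, s i ∈ Set.Icc δ M) ∧ Monotone s}) :
    (∫ s in R, ∏ i, (s i)⁻¹) ≤
      (1 / (k.factorial : ℝ)) * (Real.log (M / δ)) ^ k := by
  set f : (Fin k → ℝ) → ℝ := fun s => ∏ i, (s i)⁻¹ with hf
  set g : ℝ → ℝ := (Set.Icc δ M).indicator (fun x => x⁻¹) with hg
  set T : Equiv.Perm (Fin k) → Set (Fin k → ℝ) :=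
    fun σ => {s | (∀ i, s i ∈ Set.Icc δ M) ∧ Monotone (s ∘ σ)} with hT
  have hT1 : {s : Fin k → ℝ | (∀ i, s i ∈ Set.Icc δ M) ∧ Monotone s} = T 1 := by
    ext s; simp [hT]
  -- measurability
  have hTmeas : ∀ σ, MeasurableSet (T σ) := by
    intro σ
    have e1 : T σ = (⋂ i, (fun s : Fin k → ℝ => s i) ⁻¹' Set.Icc δ M) ∩
        (⋂ (i) (j) (_ : i ≤ j), {s : Fin k → ℝ | s (σ i) ≤ s (σ j)}) := by
      ext s
      simp only [hT, Set.mem_setOf_eq, Set.mem_inter_iff, Set.mem_iInter, Set.mem_preimage]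
      exact and_congr Iff.rfl ⟨fun h i j hij => h hij, fun h a b hab => h a b hab⟩
    rw [e1]
    exact (MeasurableSet.iInter fun i => (measurable_pi_apply i) measurableSet_Icc).inter
      (MeasurableSet.iInter fun i => MeasurableSet.iInter fun j => MeasurableSet.iInter
        fun _ => measurableSet_le (measurable_pi_apply _) (measurable_pi_apply _))
  -- integrability on the box
  have hboxmeas : MeasurableSet (Set.pi Set.univ fun _ : Fin k => Set.Icc δ M) :=
    MeasurableSet.univ_pi fun _ => measurableSet_Icc
  have hIntBox : IntegrableOn f (Set.pi Set.univ fun _ : Fin k => Set.Icc δ M) := by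
    apply ContinuousOn.integrableOn_compact (isCompact_univ_pi fun _ => isCompact_Icc)
    apply continuousOn_finset_prod
    intro i _
    exact ((continuous_apply i).continuousOn).inv₀ fun s hs =>
      ne_of_gt (lt_of_lt_of_le hδ (hs i (Set.mem_univ i)).1)
  have hInt : ∀ σ, IntegrableOn f (T σ) := fun σ =>
    hIntBox.mono_set fun s hs i _ => hs.1 i
  have hf0 : ∀ s : Fin k → ℝ, (∀ i, s i ∈ Set.Icc δ M) → 0 ≤ f s := fun s hs =>
    Finset.prod_nonneg fun i _ => inv_nonneg.2 (le_trans hδ.le (hs i).1)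
  -- permutation invariance
  have hperm : ∀ σ, (∫ s in T σ, f s) = ∫ s in T 1, f s := by
    intro σ
    set e : (Fin k → ℝ) ≃ᵐ (Fin k → ℝ) :=
      MeasurableEquiv.piCongrLeft (fun _ : Fin k => ℝ) (Equiv.symm (σ : Fin k ≃ Fin k)) with hedef
    have he : ∀ (x : Fin k → ℝ) (i : Fin k), e x i = x (σ i) := by
      intro x i
      rw [hedef]
      simp [MeasurableEquiv.piCongrLeft, Equiv.piCongrLeft]
    have hpre : ⇑e ⁻¹' (T 1) = T σ := by
      ext x
      simp only [Set.mem_preimage, hT, Set.mem_setOf_eq, Equiv.Perm.coe_one, Function.comp_id,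
        Function.comp_def, he]
      constructor
      · rintro ⟨h1, h2⟩
        exact ⟨fun i => by simpa using h1 (σ.symm i), h2⟩
      · rintro ⟨h1, h2⟩
        exact ⟨fun i => h1 _, h2⟩
    have hmp := (volume_measurePreserving_piCongrLeft (fun _ : Fin k => ℝ)
      (Equiv.symm (σ : Fin k ≃ Fin k))).setIntegral_preimage_emb
      (MeasurableEquiv.measurableEmbedding _) f (T 1)
    rw [← hedef] at hmp
    rw [hpre] at hmp
    rw [← hmp]
    apply setIntegral_congr_fun (hTmeas σ)
    intro x _
    show f x = f (e x)
    simp only [hf, he]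
    exact (Equiv.prod_comp σ fun i => (x i)⁻¹).symm
  -- sum over permutations vs box integral
  have hsum_le : ∑ σ : Equiv.Perm (Fin k), (∫ s in T σ, f s) ≤ ∫ s : Fin k → ℝ, ∏ i, g (s i) := by
    have hGind : (fun s : Fin k → ℝ => ∏ i, g (s i)) =
        (Set.pi Set.univ fun _ : Fin k => Set.Icc δ M).indicator f := by
      ext s
      by_cases hmem : ∀ i, s i ∈ Set.Icc δ M
      · rw [Set.indicator_of_mem (by exact fun i _ => hmem i)]
        exact Finset.prod_congr rfl fun i _ => Set.indicator_of_mem (hmem i) _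
      · push_neg at hmem
        obtain ⟨i0, hi0⟩ := hmem
        rw [Set.indicator_of_notMem (fun hc => hi0 (Set.mem_univ_pi.mp hc i0))]
        exact Finset.prod_eq_zero (Finset.mem_univ i0) (Set.indicator_of_notMem hi0 _)
    have hGint : Integrable (fun s : Fin k → ℝ => ∏ i, g (s i)) := by
      rw [hGind]; exact (integrable_indicator_iff hboxmeas).2 hIntBox
    calc ∑ σ : Equiv.Perm (Fin k), (∫ s in T σ, f s)
        = ∑ σ : Equiv.Perm (Fin k), ∫ s, (T σ).indicator f s := by
          exact Finset.sum_congr rfl fun σ _ => (integral_indicator (hTmeas σ)).symm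
      _ = ∫ s, ∑ σ : Equiv.Perm (Fin k), (T σ).indicator f s := by
          rw [integral_finset_sum]
          exact fun σ _ => (integrable_indicator_iff (hTmeas σ)).2 (hInt σ)
      _ ≤ ∫ s : Fin k → ℝ, ∏ i, g (s i) := by
          apply integral_mono_ae
          · exact integrable_finset_sum _ fun σ _ =>
              (integrable_indicator_iff (hTmeas σ)).2 (hInt σ)
          · exact hGint
          · have hN : volume (⋃ (i : Fin k) (j : Fin k) (_ : i ≠ j),
                {s : Fin k → ℝ | s i = s j}) = 0 :=
              measure_iUnion_null fun i => measure_iUnion_null fun j =>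
                measure_iUnion_null fun hij => diag_null hij
            filter_upwards [measure_eq_zero_iff_ae_notMem.mp hN] with s hs
            simp only [Set.mem_iUnion, Set.mem_setOf_eq, not_exists] at hs
            have hinj : Function.Injective s := by
              intro a b hab
              by_contra hne
              exact hs a b hne hab
            by_cases hex : ∃ σ, s ∈ T σ
            · obtain ⟨σ₀, hσ₀⟩ := hex
              have hGs : (∏ i, g (s i)) = f s :=
                Finset.prod_congr rfl fun i _ => Set.indicator_of_mem (hσ₀.1 i) _
              rw [Finset.sum_eq_single σ₀]
              · rw [Set.indicator_of_mem hσ₀, hGs]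
              · intro τ _ hτ
                apply Set.indicator_of_notMem
                intro hmem
                exact hτ (perm_eq_of_monotone hinj hmem.2 hσ₀.2)
              · intro hc; exact absurd (Finset.mem_univ σ₀) hc
            · push_neg at hex
              have hz : ∀ σ : Equiv.Perm (Fin k), (T σ).indicator f s = 0 :=
                fun σ => Set.indicator_of_notMem (hex σ) f
              rw [Finset.sum_congr rfl fun σ _ => hz σ, Finset.sum_const_zero]
              exact Finset.prod_nonneg fun i _ =>
                Set.indicator_nonneg (fun x hx => inv_nonneg.2 (le_trans hδ.le hx.1)) _
  -- compute the box integral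
  have hgval : (∫ x, g x) = Real.log (M / δ) := by
    rw [hg, integral_indicator measurableSet_Icc, integral_Icc_eq_integral_Ioc,
      ← intervalIntegral.integral_of_le hδM]
    exact integral_inv (Set.notMem_uIcc_of_lt hδ (lt_of_lt_of_le hδ hδM))
  have hbox_val : (∫ s : Fin k → ℝ, ∏ i, g (s i)) = (Real.log (M / δ)) ^ k := by
    rw [volume_pi, integral_fintype_prod_eq_pow (ι := Fin k) g, hgval, Fintype.card_fin]
  -- combine
  have hfac : (0:ℝ) < (k.factorial : ℝ) := by positivity
  have hT1int : (k.factorial : ℝ) * (∫ s in T 1, f s) ≤ (Real.log (M / δ)) ^ k := by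
    have : ∑ σ : Equiv.Perm (Fin k), (∫ s in T σ, f s)
        = (k.factorial : ℝ) * ∫ s in T 1, f s := by
      rw [Finset.sum_congr rfl fun σ _ => hperm σ, Finset.sum_const, Finset.card_univ,
        Fintype.card_perm, Fintype.card_fin, nsmul_eq_mul]
    rw [← this]
    rw [hbox_val] at hsum_le
    exact hsum_le
  have hstep1 : (∫ s in R, f s) ≤ ∫ s in T 1, f s := by
    apply setIntegral_mono_set (hInt 1)
    · exact (ae_restrict_iff' (hTmeas 1)).2 (Filter.Eventually.of_forall fun s hs => hf0 s hs.1)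
    · exact HasSubset.Subset.eventuallyLE (hT1 ▸ hR)
  calc (∫ s in R, f s) ≤ ∫ s in T 1, f s := hstep1
    _ ≤ (1 / (k.factorial : ℝ)) * (Real.log (M / δ)) ^ k := by
        rw [div_mul_eq_mul_div, one_mul, le_div_iff₀ hfac]
        linarith [hT1int]

/-- Let `δ ∈ (0,1)`, `h ≥ 3` with `hδ ≤ 3`, and `k = ⌊h/3⌋`.  With
`R(h,δ) = {s ∈ ℝ^k : δ ≤ s₁ ≤ ⋯ ≤ s_k, s₁ + ⋯ + s_{k−1} + (h−k+1)s_k ≤ 3}`,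
one has `∫_{R(h,δ)} ds/(s₁⋯s_k) ≤ (1/k!)·(log((3−(k−1)δ)/((h−k+1)δ)))^k`. -/
theorem integral_first_region_bound (δ : ℝ) (hδ0 : 0 < δ) (hδ1 : δ < 1)
    (h : ℕ) (hh : 3 ≤ h) (hhδ : (h : ℝ) * δ ≤ 3) (k : ℕ) (hk : k = h / 3) :
    (∫ s : Fin k → ℝ in
        {s | (∀ i, δ ≤ s i) ∧ Monotone s ∧
          (∑ i ∈ Finset.univ.filter (fun i : Fin k => (i : ℕ) < k - 1), s i)
            + ((h : ℝ) - (k : ℝ) + 1) * s ⟨k - 1, by omega⟩ ≤ 3},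
        ∏ i, (s i)⁻¹) ≤
      (1 / (k.factorial : ℝ)) *
        (Real.log ((3 - ((k : ℝ) - 1) * δ) / (((h : ℝ) - (k : ℝ) + 1) * δ))) ^ k := by
  have hk1 : 1 ≤ k := by omega
  have hkh : k ≤ h := by omega
  have hcast : ((k : ℝ)) ≤ (h : ℝ) := by exact_mod_cast hkh
  have hpos : (0 : ℝ) < (h : ℝ) - (k : ℝ) + 1 := by linarith
  set M : ℝ := (3 - ((k : ℝ) - 1) * δ) / ((h : ℝ) - (k : ℝ) + 1) with hM
  have hδM : δ ≤ M := by
    rw [hM, le_div_iff₀ hpos]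
    nlinarith [hhδ]
  have hMδ : M / δ = (3 - ((k : ℝ) - 1) * δ) / (((h : ℝ) - (k : ℝ) + 1) * δ) := by
    rw [hM, div_div]
  -- card of the filter
  have hcard : (Finset.univ.filter (fun i : Fin k => (i : ℕ) < k - 1)).card = k - 1 := by
    have hmap : Finset.univ.filter (fun i : Fin k => (i : ℕ) < k - 1) =
        Finset.univ.map (Fin.castLEEmb (Nat.sub_le k 1)) := by
      ext a
      simp only [Finset.mem_filter, Finset.mem_univ, true_and, Finset.mem_map,
        Fin.castLEEmb_apply]
      constructor
      · intro ha; exact ⟨⟨(a : ℕ), ha⟩, by ext; simp⟩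
      · rintro ⟨b, rfl⟩; simpa using b.isLt
    rw [hmap, Finset.card_map, Finset.card_univ, Fintype.card_fin]
  -- the subset relation
  apply le_trans
    (le_of_eq (rfl :
      (∫ s : Fin k → ℝ in
        {s | (∀ i, δ ≤ s i) ∧ Monotone s ∧
          (∑ i ∈ Finset.univ.filter (fun i : Fin k => (i : ℕ) < k - 1), s i)
            + ((h : ℝ) - (k : ℝ) + 1) * s ⟨k - 1, by omega⟩ ≤ 3},
        ∏ i, (s i)⁻¹) = _))
  rw [← hMδ]
  apply key_bound k δ M hδ0 hδM
  intro s hs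
  obtain ⟨hs1, hs2, hs3⟩ := hs
  have hlast : ∀ i : Fin k, s i ≤ s ⟨k - 1, by omega⟩ := by
    intro i
    apply hs2
    show (i : ℕ) ≤ k - 1
    omega
  have hsumlb : ((k : ℝ) - 1) * δ ≤
      ∑ i ∈ Finset.univ.filter (fun i : Fin k => (i : ℕ) < k - 1), s i := by
    calc ((k : ℝ) - 1) * δ = ((k - 1 : ℕ) : ℝ) * δ := by
          rw [Nat.cast_sub hk1, Nat.cast_one]
      _ = ∑ _i ∈ Finset.univ.filter (fun i : Fin k => (i : ℕ) < k - 1), δ := by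
          rw [Finset.sum_const, hcard, nsmul_eq_mul]
      _ ≤ _ := Finset.sum_le_sum fun i _ => hs1 i
  have hlastM : s ⟨k - 1, by omega⟩ ≤ M := by
    rw [hM, le_div_iff₀ hpos]
    nlinarith [hs3, hsumlb]
  exact ⟨fun i => ⟨hs1 i, le_trans (hlast i) hlastM⟩, hs2⟩
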